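/- arXiv:2303.16602 — 5 statements merged into one kernel-verified Lean document; each statement's English description precedes it below -/
import Mathlib

section
/- Let (a_n) be a strictly increasing sequence of positive integers such that log(a_n)/n converges to log(α) for some real α > 1, let z be a nonzero complex number with r = |z|, and let 0 ≤ x < 1. Then the Dirichlet-type series ∑_{n=1}^∞ z^n (a_n + x)^{-s} converges absolutely for every complex s with Re(s) > log(r)/log(α). -/
open Complex Filter Topology

theorem lerch_abscissa_convergence
    (a : ℕ → ℕ) (hmono : StrictMono a) (hpos : ∀ n, 0 < a n)
    (α : ℝ) (hα : 1 < α)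
    (hlog : Tendsto (fun n : ℕ => Real.log (a n) / n) atTop (𝓝 (Real.log α)))
    (z : ℂ) (hz : z ≠ 0) (x : ℝ) (hx0 : 0 ≤ x) (hx1 : x < 1)
    (s : ℂ) (hs : Real.log ‖z‖ / Real.log α < s.re) :
    Summable (fun n : ℕ =>
      ‖z ^ (n + 1) * (((a (n + 1) : ℝ) + x : ℝ) : ℂ) ^ (-s)‖) := by
  set r := ‖z‖ with hr
  have hr0 : 0 < r := norm_pos_iff.mpr hz
  have hlogα : 0 < Real.log α := Real.log_pos hα
  set σ := s.re with hσ
  set L : ℝ := Real.log r - σ * Real.log α with hLdef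
  have hL0 : L < 0 := by
    have := (div_lt_iff₀ hlogα).mp hs
    rw [hLdef]; nlinarith
  set c := Real.exp (L / 2) with hc
  have hc0 : 0 < c := Real.exp_pos _
  have hc1 : c < 1 := by
    rw [hc, Real.exp_lt_one_iff]
    linarith
  have ha1 : ∀ n : ℕ, (1 : ℝ) ≤ (a (n + 1) : ℝ) := fun n =>
    Nat.one_le_cast.mpr (hpos (n + 1))
  have hb : ∀ n : ℕ, 0 < (a (n + 1) : ℝ) + x := fun n => by
    have := ha1 n; linarith
  set t : ℕ → ℝ := fun n => r ^ (n + 1) * ((a (n + 1) : ℝ) + x) ^ (-σ) with ht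
  have ht0 : ∀ n, 0 < t n := fun n =>
    mul_pos (pow_pos hr0 _) (Real.rpow_pos_of_pos (hb n) _)
  have key : ∀ n : ℕ, ‖z ^ (n + 1) * (((a (n + 1) : ℝ) + x : ℝ) : ℂ) ^ (-s)‖
      = t n := by
    intro n
    rw [norm_mul, norm_pow, Complex.norm_cpow_eq_rpow_re_of_pos (hb n)]
    simp [ht, hσ, hr]
  -- limits
  have h1 : Tendsto (fun n : ℕ => Real.log (a (n + 1)) / ((n : ℝ) + 1)) atTop
      (𝓝 (Real.log α)) := by
    have h := hlog.comp (tendsto_add_atTop_nat 1)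
    refine h.congr fun n => ?_
    simp only [Function.comp_apply]
    push_cast
    ring
  have hn1 : Tendsto (fun n : ℕ => ((n : ℝ) + 1) / n) atTop (𝓝 1) := by
    have h : Tendsto (fun n : ℕ => 1 + 1 / (n : ℝ)) atTop (𝓝 (1 + 0)) :=
      tendsto_const_nhds.add tendsto_one_div_atTop_nhds_zero_nat
    rw [add_zero] at h
    refine h.congr' ?_
    filter_upwards [eventually_gt_atTop 0] with n hn
    have hn' : (n : ℝ) ≠ 0 := Nat.cast_ne_zero.mpr hn.ne'
    field_simp
  have h2 : Tendsto (fun n : ℕ => Real.log (a (n + 1)) / (n : ℝ)) atTop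
      (𝓝 (Real.log α)) := by
    have h := h1.mul hn1
    rw [mul_one] at h
    refine h.congr' ?_
    filter_upwards [eventually_gt_atTop 0] with n hn
    have hn' : (n : ℝ) ≠ 0 := Nat.cast_ne_zero.mpr hn.ne'
    have hn1' : ((n : ℝ) + 1) ≠ 0 := by positivity
    field_simp
  have h3 : Tendsto (fun n : ℕ => Real.log ((a (n + 1) : ℝ) + x) / (n : ℝ)) atTop
      (𝓝 (Real.log α)) := by
    have hupper : Tendsto (fun n : ℕ => Real.log 2 / (n : ℝ) + Real.log (a (n + 1)) / n)
        atTop (𝓝 (0 + Real.log α)) :=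
      (tendsto_const_div_atTop_nhds_zero_nat _).add h2
    rw [zero_add] at hupper
    refine tendsto_of_tendsto_of_tendsto_of_le_of_le' h2 hupper ?_ ?_
    · filter_upwards [eventually_gt_atTop 0] with n hn
      have hn' : (0 : ℝ) < n := Nat.cast_pos.mpr hn
      refine div_le_div_of_nonneg_right ?_ hn'.le
      exact Real.log_le_log (by linarith [ha1 n]) (by linarith)
    · filter_upwards [eventually_gt_atTop 0] with n hn
      have hn' : (0 : ℝ) < n := Nat.cast_pos.mpr hn
      rw [← add_div]
      refine div_le_div_of_nonneg_right ?_ hn'.le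
      have h2a : Real.log 2 + Real.log (a (n + 1)) = Real.log (2 * a (n + 1)) :=
        (Real.log_mul two_ne_zero (by linarith [ha1 n])).symm
      rw [h2a]
      exact Real.log_le_log (hb n) (by linarith [ha1 n])
  have hlogt : ∀ n : ℕ, Real.log (t n) = ((n : ℝ) + 1) * Real.log r
      - σ * Real.log ((a (n + 1) : ℝ) + x) := by
    intro n
    rw [ht]
    rw [Real.log_mul (pow_ne_zero _ hr0.ne') (Real.rpow_pos_of_pos (hb n) _).ne',
      Real.log_pow, Real.log_rpow (hb n)]
    push_cast
    ring
  have hmain : Tendsto (fun n : ℕ => Real.log (t n) / (n : ℝ)) atTop (𝓝 L) := by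
    have h := (hn1.mul_const (Real.log r)).sub (h3.const_mul σ)
    rw [one_mul] at h
    refine Tendsto.congr ?_ h
    intro n
    rw [hlogt n, sub_div, mul_div_right_comm, mul_div_assoc]
  have hev : ∀ᶠ n : ℕ in atTop, t n ≤ c ^ n := by
    have hLL : L < L / 2 := by linarith
    filter_upwards [hmain.eventually_lt_const hLL, eventually_gt_atTop 0] with n h hn
    have hn' : (0 : ℝ) < n := Nat.cast_pos.mpr hn
    have hlt : Real.log (t n) < n * (L / 2) := by
      rw [mul_comm]; exact (div_lt_iff₀ hn').mp h
    have hlogc : Real.log (c ^ n) = n * (L / 2) := by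
      rw [Real.log_pow, hc, Real.log_exp]
    have := (Real.log_lt_log_iff (ht0 n) (pow_pos hc0 n)).mp (by rw [hlogc]; exact hlt)
    exact this.le
  have hgeom : Summable (fun n : ℕ => c ^ n) := summable_geometric_of_lt_one hc0.le hc1
  have hsum : Summable t := by
    apply summable_of_isBigO_nat hgeom
    apply Asymptotics.IsBigO.of_bound 1
    filter_upwards [hev] with n hn
    rw [one_mul, Real.norm_eq_abs, Real.norm_eq_abs, _root_.abs_of_nonneg (ht0 n).le,
      _root_.abs_of_nonneg (pow_nonneg hc0.le n)]
    exact hn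
  exact hsum.congr fun n => (key n).symm
end

section
/- Let (a_n) be a strictly increasing sequence of positive integers with log(a_n)/n → log(α) for some α > 1, let z be a complex number with |z| = r > 0, and 0 ≤ x < 1. Then for every complex s with Re(s) < log(r)/log(α), the series ∑_{n=1}^∞ z^n (a_n + x)^{-s} diverges (the abscissa of convergence equals log(r)/log(α)). -/
open Complex Filter Topology

theorem lerch_abscissa_divergence
    (a : ℕ → ℕ) (hmono : StrictMono a) (hpos : ∀ n, 0 < a n)
    (α : ℝ) (hα : 1 < α)
    (hlog : Tendsto (fun n : ℕ => Real.log (a n) / n) atTop (𝓝 (Real.log α)))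
    (z : ℂ) (hz : 0 < ‖z‖) (x : ℝ) (hx0 : 0 ≤ x) (hx1 : x < 1)
    (s : ℂ) (hs : s.re < Real.log ‖z‖ / Real.log α) :
    ¬ ∃ L : ℂ, Tendsto (fun N : ℕ =>
        ∑ n ∈ Finset.range N, z ^ (n + 1) * (((a (n + 1) : ℝ) + x : ℝ) : ℂ) ^ (-s))
      atTop (𝓝 L) := by
  rintro ⟨L, hL⟩
  set r := ‖z‖ with hr
  have hlogα : 0 < Real.log α := Real.log_pos hα
  have hc : 0 < Real.log r - s.re * Real.log α := by
    have := (lt_div_iff₀ hlogα).mp hs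
    linarith
  -- basic positivity of base
  set y : ℕ → ℝ := fun N => (a (N + 1) : ℝ) + x with hy
  have hyge : ∀ N, 1 ≤ y N := by
    intro N
    have : (1 : ℝ) ≤ (a (N + 1) : ℝ) := by exact_mod_cast hpos (N + 1)
    simp only [hy]; linarith
  have hypos : ∀ N, 0 < y N := fun N => lt_of_lt_of_le one_pos (hyge N)
  -- terms tend to 0
  have hterm : Tendsto (fun N : ℕ => z ^ (N + 1) * ((y N : ℝ) : ℂ) ^ (-s)) atTop (𝓝 0) := by
    have h1 := (hL.comp (tendsto_add_atTop_nat 1)).sub hL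
    rw [sub_self] at h1
    refine h1.congr fun N => ?_
    simp only [Function.comp, Finset.sum_range_succ, add_sub_cancel_left, hy]
  -- norms tend to 0
  have habs : Tendsto (fun N : ℕ => ‖z ^ (N + 1) * ((y N : ℝ) : ℂ) ^ (-s)‖) atTop (𝓝 0) := by
    simpa using hterm.norm
  -- compute the norm as an exponential
  have hnorm : ∀ N : ℕ, ‖z ^ (N + 1) * ((y N : ℝ) : ℂ) ^ (-s)‖
      = Real.exp (((N : ℝ) + 1) * Real.log r - s.re * Real.log (y N)) := by
    intro N
    rw [norm_mul, norm_pow,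
      Complex.norm_cpow_eq_rpow_re_of_pos (hypos N), ← hr]
    rw [Complex.neg_re, Real.rpow_def_of_pos (hypos N)]
    rw [show (r : ℝ) ^ (N + 1) = Real.exp (((N : ℝ) + 1) * Real.log r) by
      rw [show ((N : ℝ) + 1) * Real.log r = Real.log (r ^ (N + 1)) by
        rw [Real.log_pow]; push_cast; ring]
      exact (Real.exp_log (by positivity)).symm]
    rw [← Real.exp_add]; ring_nf
  -- the shifted log limit
  have hshift : Tendsto (fun N : ℕ => Real.log (a (N + 1)) / ((N : ℝ) + 1)) atTop
      (𝓝 (Real.log α)) := by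
    have := hlog.comp (tendsto_add_atTop_nat 1)
    refine this.congr fun N => ?_
    simp [Function.comp]
  -- the correction tends to 0
  have hcorr : Tendsto (fun N : ℕ =>
      (Real.log (y N) - Real.log (a (N + 1))) / ((N : ℝ) + 1)) atTop (𝓝 0) := by
    have hb : Tendsto (fun N : ℕ => Real.log 2 / ((N : ℝ) + 1)) atTop (𝓝 0) := by
      simpa [div_eq_mul_inv] using (tendsto_one_div_add_atTop_nhds_zero_nat.const_mul (Real.log 2))
    refine squeeze_zero (fun N => ?_) (fun N => ?_) hb
    · have hN : (0 : ℝ) < (N : ℝ) + 1 := by positivity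
      have h1 : Real.log (a (N + 1)) ≤ Real.log (y N) := by
        apply Real.log_le_log (by exact_mod_cast hpos (N + 1))
        simp only [hy]; linarith
      exact div_nonneg (by linarith) hN.le
    · have hN : (0 : ℝ) < (N : ℝ) + 1 := by positivity
      rw [div_le_div_iff_of_pos_right hN]
      have hapos : (0 : ℝ) < (a (N + 1) : ℝ) := by exact_mod_cast hpos (N + 1)
      have h2 : y N ≤ 2 * (a (N + 1) : ℝ) := by
        have : (1 : ℝ) ≤ (a (N + 1) : ℝ) := by exact_mod_cast hpos (N + 1)
        simp only [hy]; linarith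
      have := Real.log_le_log (hypos N) h2
      rw [Real.log_mul (by norm_num) (ne_of_gt hapos)] at this
      linarith
  -- the log of base over N+1 tends to log α
  have hylim : Tendsto (fun N : ℕ => Real.log (y N) / ((N : ℝ) + 1)) atTop
      (𝓝 (Real.log α)) := by
    have := hshift.add hcorr
    rw [add_zero] at this
    refine this.congr fun N => ?_
    rw [← add_div]; ring_nf
  -- the exponent over N+1 tends to c > 0
  have hGdiv : Tendsto (fun N : ℕ =>
      (((N : ℝ) + 1) * Real.log r - s.re * Real.log (y N)) / ((N : ℝ) + 1)) atTop
      (𝓝 (Real.log r - s.re * Real.log α)) := by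
    have := (tendsto_const_nhds (x := Real.log r)).sub (hylim.const_mul s.re)
    refine this.congr fun N => ?_
    have hN : ((N : ℝ) + 1) ≠ 0 := by positivity
    field_simp
  have hev : ∀ᶠ N : ℕ in atTop,
      0 < (((N : ℝ) + 1) * Real.log r - s.re * Real.log (y N)) / ((N : ℝ) + 1) :=
    hGdiv.eventually (eventually_gt_nhds hc)
  have hlt : ∀ᶠ N : ℕ in atTop, ‖z ^ (N + 1) * ((y N : ℝ) : ℂ) ^ (-s)‖ < 1 :=
    habs.eventually (eventually_lt_nhds one_pos)
  rcases ((hev.and hlt).exists) with ⟨N, h1, h2⟩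
  have hN : (0 : ℝ) < (N : ℝ) + 1 := by positivity
  have hGpos : 0 < ((N : ℝ) + 1) * Real.log r - s.re * Real.log (y N) :=
    (div_pos_iff.mp h1).resolve_right (fun h => absurd h.2 (not_lt.mpr hN.le)) |>.1
  rw [hnorm N] at h2
  exact absurd h2 (not_lt.mpr (Real.one_le_exp hGpos.le))
end

section
/- Let (a_n) be a strictly increasing sequence of positive integers such that the series ∑_{n=1}^∞ z^n a_n^{-σ'} converges absolutely for some real σ'. Then for every complex s with Re(s) > σ' and every real x with 0 ≤ x < 1, the identity ∑_{n=1}^∞ z^n (a_n + x)^{-s} = ∑_{j=0}^∞ C(-s, j) (∑_{n=1}^∞ z^n a_n^{-(s+j)}) x^j holds, with all series involved converging absolutely. -/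
open Complex Filter Topology FormalMultilinearSeries

noncomputable def cbinom (a : ℂ) (j : ℕ) : ℂ :=
  (∏ i ∈ Finset.range j, (a - i)) / (j.factorial : ℂ)

lemma cbinom_zero (a : ℂ) : cbinom a 0 = 1 := by simp [cbinom]

lemma cbinom_one (a : ℂ) : cbinom a 1 = a := by simp [cbinom]

lemma cbinom_succ (a : ℂ) (j : ℕ) :
    ((j : ℂ) + 1) * cbinom a (j + 1) = (a - j) * cbinom a j := by
  have hj : ((j.factorial : ℂ)) ≠ 0 := Nat.cast_ne_zero.2 j.factorial_ne_zero
  have hj1 : ((j : ℂ) + 1) ≠ 0 := Nat.cast_add_one_ne_zero j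
  simp only [cbinom, Finset.prod_range_succ, Nat.factorial_succ, Nat.cast_mul]
  push_cast
  field_simp

lemma norm_cbinom_succ_le (a : ℂ) (j : ℕ) :
    ‖cbinom a (j + 1)‖ ≤ ‖cbinom a j‖ * ((‖a‖ + j) / (j + 1)) := by
  have h : cbinom a (j+1) = (a - j) * cbinom a j / ((j:ℂ) + 1) := by
    rw [eq_div_iff (Nat.cast_add_one_ne_zero j), mul_comm, cbinom_succ]
  rw [h, norm_div, norm_mul]
  have h1 : ‖(j : ℂ) + 1‖ = (j : ℝ) + 1 := by norm_cast
  have h2 : ‖a - (j:ℂ)‖ ≤ ‖a‖ + j := by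
    simpa using norm_sub_le a (j : ℂ)
  rw [h1]
  have hd : (0:ℝ) < (j:ℝ) + 1 := by positivity
  calc ‖a - (j:ℂ)‖ * ‖cbinom a j‖ / ((j:ℝ) + 1)
      ≤ (‖a‖ + j) * ‖cbinom a j‖ / ((j:ℝ) + 1) := by gcongr
    _ = ‖cbinom a j‖ * ((‖a‖ + j) / (j + 1)) := by ring

lemma summable_norm_cbinom_mul (a : ℂ) {r : ℝ} (h0 : 0 ≤ r) (h1 : r < 1) :
    Summable (fun j : ℕ => ‖cbinom a j‖ * r ^ j) := by
  rcases eq_or_lt_of_le h0 with rfl | hr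
  · apply (summable_nat_add_iff 1).1
    simpa using summable_zero
  · set l : ℝ := (1 + r) / 2 with hl
    have hl1 : l < 1 := by rw [hl]; linarith
    have hlr : r < l := by rw [hl]; linarith
    have htend : Tendsto (fun j : ℕ => ((‖a‖ + j) / (j + 1)) * r) atTop (𝓝 r) := by
      have : Tendsto (fun j : ℕ => (‖a‖ + j) / (j + 1)) atTop (𝓝 1) := by
        have h2 : ∀ j : ℕ, (‖a‖ + j) / (j + 1) = 1 + (‖a‖ - 1) * (1 / (j + 1)) := by
          intro j
          have : (j : ℝ) + 1 ≠ 0 := by positivity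
          field_simp
          ring
        simp_rw [h2]
        have := tendsto_one_div_add_atTop_nhds_zero_nat (𝕜 := ℝ)
        simpa using (tendsto_const_nhds (x := (1:ℝ))).add ((tendsto_const_nhds (x := ‖a‖ - 1)).mul this)
      simpa using this.mul_const r
    have hev : ∀ᶠ j : ℕ in atTop, ((‖a‖ + j) / (j + 1)) * r ≤ l :=
      htend.eventually_le_const hlr
    apply summable_of_ratio_norm_eventually_le hl1
    filter_upwards [hev] with j hj
    have hb := norm_cbinom_succ_le a j
    have hrj : (0:ℝ) ≤ r ^ j := by positivity
    calc ‖‖cbinom a (j+1)‖ * r ^ (j+1)‖ = ‖cbinom a (j+1)‖ * r ^ (j+1) := by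
          rw [Real.norm_of_nonneg (by positivity)]
      _ ≤ (‖cbinom a j‖ * ((‖a‖ + j) / (j + 1))) * r ^ (j+1) := by gcongr
      _ = (((‖a‖ + j) / (j + 1)) * r) * (‖cbinom a j‖ * r ^ j) := by ring
      _ ≤ l * (‖cbinom a j‖ * r ^ j) := by
          apply mul_le_mul_of_nonneg_right hj (by positivity)
      _ = l * ‖‖cbinom a j‖ * r ^ j‖ := by rw [Real.norm_of_nonneg (by positivity)]

lemma hasSum_cbinom (a : ℂ) {u : ℂ} (hu : ‖u‖ < 1) :
    HasSum (fun j : ℕ => cbinom a j * u ^ j) ((1 + u) ^ a) := by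
  set p : FormalMultilinearSeries ℂ ℂ ℂ := ofScalars ℂ (cbinom a) with hp
  have hrad : 1 ≤ p.radius := by
    apply ENNReal.le_of_forall_nnreal_lt
    intro r hr
    apply p.le_radius_of_summable_norm
    have hr1 : (r : ℝ) < 1 := by exact_mod_cast hr
    have := summable_norm_cbinom_mul a r.coe_nonneg hr1
    apply this.congr
    intro j
    rw [hp, ofScalars_norm]
  set F := p.sum with hFdef
  have hF : HasFPowerSeriesOnBall F p 0 1 :=
    (p.hasFPowerSeriesOnBall (lt_of_lt_of_le one_pos hrad)).mono one_pos hrad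
  have hmem : ∀ {w : ℂ}, ‖w‖ < 1 → w ∈ Metric.eball (0 : ℂ) 1 := by
    intro w hw
    rw [Metric.mem_eball, edist_zero_right]
    rw [enorm_eq_nnnorm]
    exact_mod_cast (by exact_mod_cast hw : ‖w‖₊ < 1)
  have hFsum : ∀ {w : ℂ}, ‖w‖ < 1 → HasSum (fun j : ℕ => cbinom a j * w ^ j) (F w) := by
    intro w hw
    have := hF.hasSum (hmem hw)
    rw [zero_add] at this
    have he : (fun j : ℕ => p j fun _ => w) = fun j : ℕ => cbinom a j * w ^ j := by
      funext j
      rw [hp, ofScalars_apply_eq, smul_eq_mul]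
    rwa [he] at this
  have hF0 : F 0 = 1 := by
    have h1 := hFsum (by simp : ‖(0:ℂ)‖ < 1)
    have h2 : HasSum (fun j : ℕ => cbinom a j * (0:ℂ) ^ j) (cbinom a 0 * (0:ℂ) ^ 0) :=
      hasSum_single 0 (fun j hj => by simp [zero_pow hj])
    simpa [cbinom_zero] using h1.unique h2
  have hdF : HasFPowerSeriesOnBall (fderiv ℂ F) p.derivSeries 0 1 := hF.fderiv
  have hder : ∀ {w : ℂ}, ‖w‖ < 1 → w ≠ 0 →
      HasSum (fun j : ℕ => ((j : ℂ) + 1) * cbinom a (j + 1) * w ^ j) (deriv F w) := by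
    intro w hw hw0
    have h1 := hdF.hasSum (hmem hw)
    rw [zero_add] at h1
    have h2 := h1.mapL (ContinuousLinearMap.apply ℂ ℂ 1)
    have hterm : (fun j : ℕ => (ContinuousLinearMap.apply ℂ ℂ 1) (p.derivSeries j fun _ => w)) =
        fun j : ℕ => ((j : ℂ) + 1) * cbinom a (j + 1) * w ^ j := by
      funext j
      have hdiag := p.derivSeries_apply_diag j w
      have hlin : (p.derivSeries j fun _ => w) w = w * (p.derivSeries j fun _ => w) 1 := by
        have h3 := (p.derivSeries j fun _ => w).map_smul w (1 : ℂ)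
        simpa [smul_eq_mul] using h3
      have hval : (p (j+1) fun _ => w) = cbinom a (j+1) * w ^ (j+1) := by
        rw [hp, ofScalars_apply_eq, smul_eq_mul]
      rw [hlin, hval] at hdiag
      have : w * (p.derivSeries j fun _ => w) 1 = w * (((j : ℂ) + 1) * cbinom a (j + 1) * w ^ j) := by
        rw [hdiag]
        push_cast [succ_nsmul, nsmul_eq_mul]
        ring
      simpa [ContinuousLinearMap.apply] using mul_left_cancel₀ hw0 this
    rw [hterm] at h2
    have hd2 : (ContinuousLinearMap.apply ℂ ℂ 1) (fderiv ℂ F w) = deriv F w := rfl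
    rwa [hd2] at h2
  have hODE : ∀ {w : ℂ}, ‖w‖ < 1 → (1 + w) * deriv F w = a * F w := by
    intro w hw
    rcases eq_or_ne w 0 with rfl | hw0
    · have hD0 : deriv F 0 = p.coeff 1 := hF.hasFPowerSeriesAt.deriv
      have hc1 : p.coeff 1 = a := by
        simp [FormalMultilinearSeries.coeff, hp, FormalMultilinearSeries.ofScalars, cbinom_one]
      rw [hD0, hc1, hF0]
      ring
    · have hD := hder hw hw0
      have hDw : HasSum (fun j : ℕ => ((j : ℂ) + 1) * cbinom a (j + 1) * w ^ (j + 1))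
          (deriv F w * w) := by
        have h4 := hD.mul_right w
        apply h4.congr_fun fun j => by rw [pow_succ]; ring
      have hg : HasSum (fun j : ℕ => (j : ℂ) * cbinom a j * w ^ j) (deriv F w * w) := by
        have h5 : HasSum (fun j : ℕ => ((j + 1 : ℕ) : ℂ) * cbinom a (j + 1) * w ^ (j + 1))
            (deriv F w * w) := by
          apply hDw.congr_fun fun j => by push_cast; ring
        have h6 := (hasSum_nat_add_iff (f := fun j : ℕ => (j : ℂ) * cbinom a j * w ^ j) 1).1 h5
        simpa using h6
      have hsum2 := hD.add hg
      have hterm2 : (fun j : ℕ => ((j : ℂ) + 1) * cbinom a (j + 1) * w ^ j +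
          (j : ℂ) * cbinom a j * w ^ j) = fun j : ℕ => a * (cbinom a j * w ^ j) := by
        funext j
        have h7 := cbinom_succ a j
        calc ((j : ℂ) + 1) * cbinom a (j + 1) * w ^ j + (j : ℂ) * cbinom a j * w ^ j
            = (((j : ℂ) + 1) * cbinom a (j + 1)) * w ^ j + (j : ℂ) * cbinom a j * w ^ j := by ring
          _ = ((a - j) * cbinom a j) * w ^ j + (j : ℂ) * cbinom a j * w ^ j := by rw [h7]
          _ = a * (cbinom a j * w ^ j) := by ring
      rw [hterm2] at hsum2
      have h8 := ((hFsum hw).mul_left a).unique hsum2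
      linear_combination -h8
  -- constancy of G
  have hball : ∀ {w : ℂ}, w ∈ Metric.ball (0 : ℂ) 1 → ‖w‖ < 1 := by
    intro w hw; simpa [Metric.mem_ball] using hw
  have hre : ∀ {w : ℂ}, ‖w‖ < 1 → 0 < (1 + w).re := by
    intro w hw
    have := Complex.abs_re_le_norm w
    simp only [Complex.add_re, Complex.one_re]
    have : |w.re| < 1 := lt_of_le_of_lt this (by simpa using hw)
    have := abs_lt.1 this
    linarith
  have hne : ∀ {w : ℂ}, ‖w‖ < 1 → (1 + w) ≠ 0 := by
    intro w hw h0
    have := hre hw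
    rw [h0] at this
    simp at this
  set G : ℂ → ℂ := fun w => F w * (1 + w) ^ (-a) with hG
  have hGderiv : ∀ w ∈ Metric.ball (0 : ℂ) 1, HasDerivAt G 0 w := by
    intro w hw
    have hw1 : ‖w‖ < 1 := hball hw
    have hdFw : HasDerivAt F (deriv F w) w :=
      ((hF.analyticAt_of_mem (hmem hw1)).differentiableAt).hasDerivAt
    have hid : HasDerivAt (fun w : ℂ => 1 + w) 1 w := by
      simpa using (hasDerivAt_id w).const_add (1 : ℂ)
    have hdc : HasDerivAt (fun w : ℂ => (1 + w) ^ (-a)) (-a * (1 + w) ^ (-a - 1) * 1) w :=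
      hid.cpow_const (Or.inl (hre hw1))
    have hprod := hdFw.mul hdc
    have hzero : deriv F w * (1 + w) ^ (-a) + F w * (-a * (1 + w) ^ (-a - 1) * 1) = 0 := by
      have hsplit : (1 + w) ^ (-a) = (1 + w) ^ (-a - 1) * (1 + w) := by
        have h9 := Complex.cpow_add (-a - 1) 1 (hne hw1)
        rw [Complex.cpow_one] at h9
        rw [← h9]
        norm_num
      rw [hsplit]
      linear_combination ((1 + w) ^ (-a - 1)) * hODE hw1
    rw [hzero] at hprod
    exact hprod
  have hGconst : ∀ {w : ℂ}, ‖w‖ < 1 → G w = G 0 := by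
    intro w hw
    have := Convex.norm_image_sub_le_of_norm_hasDerivWithin_le
      (f := G) (f' := fun _ => 0) (s := Metric.ball (0 : ℂ) 1) (C := 0)
      (fun x hx => (hGderiv x hx).hasDerivWithinAt)
      (fun x _ => by simp) (convex_ball 0 1)
      (Metric.mem_ball_self one_pos) (by simpa [Metric.mem_ball] using hw)
    rw [zero_mul] at this
    exact sub_eq_zero.1 (norm_le_zero_iff.1 this)
  have hG0 : G 0 = 1 := by
    simp [hG, hF0]
  have hfw : F u * (1 + u) ^ (-a) = 1 := by
    have h10 := hGconst hu
    rw [hG0] at h10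
    simpa [hG] using h10
  have hmul : (1 + u) ^ (-a) * (1 + u) ^ a = 1 := by
    rw [← Complex.cpow_add _ _ (hne hu)]
    simp
  have hFu : F u = (1 + u) ^ a := by
    calc F u = F u * ((1 + u) ^ (-a) * (1 + u) ^ a) := by rw [hmul, mul_one]
      _ = (F u * (1 + u) ^ (-a)) * (1 + u) ^ a := by ring
      _ = (1 + u) ^ a := by rw [hfw, one_mul]
  exact hFu ▸ hFsum hu



theorem ramanujan_formula_lerch
    (a : ℕ → ℕ) (hmono : StrictMono a) (hpos : ∀ n, 0 < a n)
    (z : ℂ) (σ' : ℝ)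
    (hconv : Summable (fun n : ℕ => Norm.norm z ^ (n + 1) * ((a (n + 1) : ℝ)) ^ (-σ')))
    (s : ℂ) (hs : σ' < s.re) (x : ℝ) (hx0 : 0 ≤ x) (hx1 : x < 1) :
    (∀ j : ℕ, Summable (fun n : ℕ =>
        Norm.norm (z ^ (n + 1) * ((a (n + 1) : ℝ) : ℂ) ^ (-(s + (j : ℂ)))))) ∧
    Summable (fun j : ℕ => Norm.norm (cbinom (-s) j *
        (∑' n : ℕ, z ^ (n + 1) * ((a (n + 1) : ℝ) : ℂ) ^ (-(s + (j : ℂ)))) * (x : ℂ) ^ j)) ∧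
    Summable (fun n : ℕ =>
        Norm.norm (z ^ (n + 1) * (((a (n + 1) : ℝ) + x : ℝ) : ℂ) ^ (-s))) ∧
    ∑' n : ℕ, z ^ (n + 1) * (((a (n + 1) : ℝ) + x : ℝ) : ℂ) ^ (-s) =
      ∑' j : ℕ, cbinom (-s) j *
        (∑' n : ℕ, z ^ (n + 1) * ((a (n + 1) : ℝ) : ℂ) ^ (-(s + (j : ℂ)))) * (x : ℂ) ^ j := by
  have hA1 : ∀ n : ℕ, (1 : ℝ) ≤ (a (n + 1) : ℝ) := fun n => by
    exact_mod_cast hpos (n + 1)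
  have hA0 : ∀ n : ℕ, (0 : ℝ) < (a (n + 1) : ℝ) := fun n => lt_of_lt_of_le one_pos (hA1 n)
  have hAne : ∀ n : ℕ, ((a (n + 1) : ℝ) : ℂ) ≠ 0 := fun n =>
    Complex.ofReal_ne_zero.2 (ne_of_gt (hA0 n))
  have hsum_gen : ∀ c : ℝ, c ≤ -σ' →
      Summable (fun n : ℕ => ‖z‖ ^ (n + 1) * (a (n + 1) : ℝ) ^ c) := by
    intro c hc
    apply Summable.of_nonneg_of_le (fun n => by positivity) _ hconv
    intro n
    have h1 : (a (n + 1) : ℝ) ^ c ≤ (a (n + 1) : ℝ) ^ (-σ') :=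
      Real.rpow_le_rpow_of_exponent_le (hA1 n) hc
    exact mul_le_mul_of_nonneg_left h1 (by positivity)
  have habs_term : ∀ (n : ℕ) (w : ℂ), ‖z ^ (n + 1) * ((a (n + 1) : ℝ) : ℂ) ^ w‖
      = ‖z‖ ^ (n + 1) * (a (n + 1) : ℝ) ^ w.re := by
    intro n w
    rw [norm_mul, norm_pow, Complex.norm_cpow_eq_rpow_re_of_pos (hA0 n)]
  have part1 : ∀ j : ℕ, Summable (fun n : ℕ =>
      ‖z ^ (n + 1) * ((a (n + 1) : ℝ) : ℂ) ^ (-(s + (j : ℂ)))‖) := by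
    intro j
    have hj : (0 : ℝ) ≤ (j : ℝ) := Nat.cast_nonneg j
    have h := hsum_gen (-(s.re + j)) (by linarith)
    apply h.congr
    intro n
    rw [habs_term]
    congr 1
  have hMsum := hsum_gen (-s.re) (by linarith)
  have hSle : ∀ j : ℕ,
      ‖∑' n : ℕ, z ^ (n + 1) * ((a (n + 1) : ℝ) : ℂ) ^ (-(s + (j : ℂ)))‖
      ≤ ∑' n : ℕ, ‖z‖ ^ (n + 1) * (a (n + 1) : ℝ) ^ (-s.re) := by
    intro j
    have hj : (0 : ℝ) ≤ (j : ℝ) := Nat.cast_nonneg j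
    have h1 : Summable fun n : ℕ =>
        ‖z ^ (n + 1) * ((a (n + 1) : ℝ) : ℂ) ^ (-(s + (j : ℂ)))‖ := by
      simpa using part1 j
    refine le_trans (norm_tsum_le_tsum_norm h1) (Summable.tsum_le_tsum ?_ h1 hMsum)
    intro n
    rw [habs_term]
    apply mul_le_mul_of_nonneg_left _ (by positivity)
    apply Real.rpow_le_rpow_of_exponent_le (hA1 n)
    simp only [Complex.neg_re, Complex.add_re, Complex.natCast_re]
    linarith
  have hcb := summable_norm_cbinom_mul (-s) hx0 hx1
  have part2 : Summable (fun j : ℕ => ‖cbinom (-s) j *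
      (∑' n : ℕ, z ^ (n + 1) * ((a (n + 1) : ℝ) : ℂ) ^ (-(s + (j : ℂ)))) * (x : ℂ) ^ j‖) := by
    apply Summable.of_nonneg_of_le (fun j => norm_nonneg _) _
      (hcb.mul_left (∑' n : ℕ, ‖z‖ ^ (n + 1) * (a (n + 1) : ℝ) ^ (-s.re)))
    intro j
    rw [norm_mul, norm_mul]
    have hx : ‖(x : ℂ) ^ j‖ = x ^ j := by
      rw [norm_pow, Complex.norm_real, Real.norm_eq_abs, _root_.abs_of_nonneg hx0]
    rw [hx]
    calc ‖cbinom (-s) j‖ *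
          ‖∑' n : ℕ, z ^ (n + 1) * ((a (n + 1) : ℝ) : ℂ) ^ (-(s + (j : ℂ)))‖ * x ^ j
        ≤ ‖cbinom (-s) j‖ *
          (∑' n : ℕ, ‖z‖ ^ (n + 1) * (a (n + 1) : ℝ) ^ (-s.re)) * x ^ j := by
          apply mul_le_mul_of_nonneg_right _ (by positivity)
          exact mul_le_mul_of_nonneg_left (hSle j) (norm_nonneg _)
      _ = (∑' n : ℕ, ‖z‖ ^ (n + 1) * (a (n + 1) : ℝ) ^ (-s.re)) *
          (‖cbinom (-s) j‖ * x ^ j) := by ring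
  -- the double sum
  set f : ℕ × ℕ → ℂ := fun q =>
    cbinom (-s) q.2 * (z ^ (q.1 + 1) * ((a (q.1 + 1) : ℝ) : ℂ) ^ (-(s + (q.2 : ℂ)))) *
      (x : ℂ) ^ q.2 with hfdef
  have hfabs_le : ∀ q : ℕ × ℕ, ‖f q‖ ≤
      (‖z‖ ^ (q.1 + 1) * (a (q.1 + 1) : ℝ) ^ (-s.re)) *
        (‖cbinom (-s) q.2‖ * x ^ q.2) := by
    rintro ⟨n, j⟩
    have hj : (0 : ℝ) ≤ (j : ℝ) := Nat.cast_nonneg j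
    have hx : ‖(x : ℂ) ^ j‖ = x ^ j := by
      rw [norm_pow, Complex.norm_real, Real.norm_eq_abs, _root_.abs_of_nonneg hx0]
    have h1 : ‖f (n, j)‖ = ‖cbinom (-s) j‖ *
        (‖z‖ ^ (n + 1) * (a (n + 1) : ℝ) ^ ((-(s + (j : ℂ))).re)) * x ^ j := by
      rw [hfdef]
      simp only [norm_mul, hx, habs_term]
    rw [h1]
    have h2 : (a (n + 1) : ℝ) ^ ((-(s + (j : ℂ))).re) ≤ (a (n + 1) : ℝ) ^ (-s.re) := by
      apply Real.rpow_le_rpow_of_exponent_le (hA1 n)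
      simp only [Complex.neg_re, Complex.add_re, Complex.natCast_re]
      linarith
    calc ‖cbinom (-s) j‖ *
          (‖z‖ ^ (n + 1) * (a (n + 1) : ℝ) ^ ((-(s + (j : ℂ))).re)) * x ^ j
        ≤ ‖cbinom (-s) j‖ *
          (‖z‖ ^ (n + 1) * (a (n + 1) : ℝ) ^ (-s.re)) * x ^ j := by
          apply mul_le_mul_of_nonneg_right _ (by positivity)
          apply mul_le_mul_of_nonneg_left _ (norm_nonneg _)
          exact mul_le_mul_of_nonneg_left h2 (by positivity)
      _ = (‖z‖ ^ (n + 1) * (a (n + 1) : ℝ) ^ (-s.re)) *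
          (‖cbinom (-s) j‖ * x ^ j) := by ring
  have habsf : Summable (fun q : ℕ × ℕ => ‖f q‖) := by
    apply Summable.of_nonneg_of_le (fun q => norm_nonneg _) hfabs_le
    exact hMsum.mul_of_nonneg hcb (fun n => by positivity) (fun j => by positivity)
  -- row sums via the binomial series
  have hrow : ∀ n : ℕ, HasSum (fun j : ℕ => f (n, j))
      (z ^ (n + 1) * (((a (n + 1) : ℝ) + x : ℝ) : ℂ) ^ (-s)) := by
    intro n
    have htx0 : (0 : ℝ) ≤ x / (a (n + 1) : ℝ) := div_nonneg hx0 (hA0 n).le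
    have htx1 : x / (a (n + 1) : ℝ) < 1 :=
      (div_lt_one (hA0 n)).2 (lt_of_lt_of_le hx1 (hA1 n))
    have hnorm : ‖((x / (a (n + 1) : ℝ) : ℝ) : ℂ)‖ < 1 := by
      rw [Complex.norm_real, Real.norm_eq_abs, _root_.abs_of_nonneg htx0]
      exact htx1
    have hb := hasSum_cbinom (-s) hnorm
    have hK := hb.mul_left (z ^ (n + 1) * ((a (n + 1) : ℝ) : ℂ) ^ (-s))
    have hterm : ∀ j : ℕ, z ^ (n + 1) * ((a (n + 1) : ℝ) : ℂ) ^ (-s) *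
        (cbinom (-s) j * ((x / (a (n + 1) : ℝ) : ℝ) : ℂ) ^ j) = f (n, j) := by
      intro j
      have hc : ((a (n + 1) : ℝ) : ℂ) ^ (-(s + (j : ℂ))) =
          ((a (n + 1) : ℝ) : ℂ) ^ (-s) * (((a (n + 1) : ℝ) : ℂ) ^ j)⁻¹ := by
        rw [neg_add, Complex.cpow_add _ _ (hAne n), Complex.cpow_neg, Complex.cpow_neg,
          Complex.cpow_natCast]
      have ht : ((x / (a (n + 1) : ℝ) : ℝ) : ℂ) ^ j =
          (x : ℂ) ^ j * (((a (n + 1) : ℝ) : ℂ) ^ j)⁻¹ := by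
        push_cast
        rw [div_pow, div_eq_mul_inv]
      simp only [hfdef]
      rw [hc, ht]
      ring
    have hval : z ^ (n + 1) * ((a (n + 1) : ℝ) : ℂ) ^ (-s) *
        ((1 + ((x / (a (n + 1) : ℝ) : ℝ) : ℂ)) ^ (-s)) =
        z ^ (n + 1) * (((a (n + 1) : ℝ) + x : ℝ) : ℂ) ^ (-s) := by
      have h1 : (1 : ℂ) + ((x / (a (n + 1) : ℝ) : ℝ) : ℂ) =
          (((1 + x / (a (n + 1) : ℝ) : ℝ)) : ℂ) := by push_cast; ring
      have h2 : ((a (n + 1) : ℝ)) * (1 + x / (a (n + 1) : ℝ)) = (a (n + 1) : ℝ) + x := by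
        rw [mul_add, mul_one, mul_div_cancel₀ _ (ne_of_gt (hA0 n))]
      rw [h1, mul_assoc, ← Complex.mul_cpow_ofReal_nonneg (hA0 n).le (by positivity), ← Complex.ofReal_mul, h2]
    rw [show (fun j : ℕ => z ^ (n + 1) * ((a (n + 1) : ℝ) : ℂ) ^ (-s) *
        (cbinom (-s) j * ((x / (a (n + 1) : ℝ) : ℝ) : ℂ) ^ j)) = fun j : ℕ => f (n, j)
      from funext hterm, hval] at hK
    exact hK
  have hnn : (0 : ℕ × ℕ → ℝ) ≤ fun q => ‖f q‖ := fun q => norm_nonneg _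
  have hps := (summable_prod_of_nonneg hnn).1 habsf
  have part3 : Summable (fun n : ℕ =>
      ‖z ^ (n + 1) * (((a (n + 1) : ℝ) + x : ℝ) : ℂ) ^ (-s)‖) := by
    apply Summable.of_nonneg_of_le (fun n => norm_nonneg _) _ hps.2
    intro n
    rw [← (hrow n).tsum_eq]
    refine le_trans (norm_tsum_le_tsum_norm ?_) ?_
    · simpa using hps.1 n
    · apply le_of_eq
      congr
  have hfsum : Summable f := by
    apply Summable.of_norm
    simpa using habsf
  refine ⟨part1, part2, part3, ?_⟩
  have huncurry : Summable (Function.uncurry fun n j : ℕ => f (n, j)) := hfsum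
  calc ∑' n : ℕ, z ^ (n + 1) * (((a (n + 1) : ℝ) + x : ℝ) : ℂ) ^ (-s)
      = ∑' (n : ℕ) (j : ℕ), f (n, j) := tsum_congr fun n => ((hrow n).tsum_eq).symm
    _ = ∑' (j : ℕ) (n : ℕ), f (n, j) := (Summable.tsum_comm huncurry).symm
    _ = ∑' j : ℕ, cbinom (-s) j *
        (∑' n : ℕ, z ^ (n + 1) * ((a (n + 1) : ℝ) : ℂ) ^ (-(s + (j : ℂ)))) * (x : ℂ) ^ j := by
      apply tsum_congr
      intro j
      rw [show (fun n : ℕ => f (n, j)) = fun n : ℕ => cbinom (-s) j *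
          ((z ^ (n + 1) * ((a (n + 1) : ℝ) : ℂ) ^ (-(s + (j : ℂ)))) * (x : ℂ) ^ j)
        from funext fun n => by rw [hfdef]; ring]
      rw [tsum_mul_left, tsum_mul_right, mul_assoc]
end

section
/- Let (a_n) be a strictly increasing sequence of positive integers, 0 ≤ x < 1, and s a fixed complex number with σ = Re(s). Viewed as a power series in z, the series ∑_{n=1}^∞ (a_n + x)^{-s} z^n has radius of convergence α^{σ}, provided log(a_n)/n → log α for some real α > 1. -/
open Complex Filter Topology

theorem radius_of_convergence_in_z
    (a : ℕ → ℕ) (hmono : StrictMono a) (hpos : ∀ n, 0 < a n)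
    (α : ℝ) (hα : 1 < α)
    (hlog : Tendsto (fun n : ℕ => Real.log (a n) / n) atTop (𝓝 (Real.log α)))
    (x : ℝ) (hx0 : 0 ≤ x) (hx1 : x < 1) (s : ℂ) :
    (∀ z : ℂ, ‖z‖ < α ^ s.re →
      Summable (fun n : ℕ =>
        ‖(((a (n + 1) : ℝ) + x : ℝ) : ℂ) ^ (-s) * z ^ (n + 1)‖)) ∧
    (∀ z : ℂ, α ^ s.re < ‖z‖ →
      ¬ Summable (fun n : ℕ =>
        (((a (n + 1) : ℝ) + x : ℝ) : ℂ) ^ (-s) * z ^ (n + 1))) := by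
  have hα0 : (0:ℝ) < α := lt_trans one_pos hα
  have ha1 : ∀ n : ℕ, (1:ℝ) ≤ (a (n+1) : ℝ) := by
    intro n; exact_mod_cast hpos (n+1)
  have hax : ∀ n : ℕ, (0:ℝ) < (a (n+1) : ℝ) + x := fun n => by linarith [ha1 n]
  -- |term n| = (a(n+1)+x)^(-σ) * |z|^(n+1)
  have habs : ∀ (z : ℂ) (n : ℕ),
      ‖(((a (n + 1) : ℝ) + x : ℝ) : ℂ) ^ (-s) * z ^ (n + 1)‖
        = ((a (n+1) : ℝ) + x) ^ (-s.re) * (‖z‖) ^ (n+1) := by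
    intro z n
    rw [norm_mul, norm_pow, Complex.norm_cpow_eq_rpow_re_of_pos (hax n)]
    norm_num
  -- log(a(n+1)+x)/n → log α
  have hlog' : Tendsto (fun n : ℕ => Real.log ((a (n+1) : ℝ) + x) / n) atTop
      (𝓝 (Real.log α)) := by
    have h1 : Tendsto (fun n : ℕ => Real.log (a (n+1)) / ((n:ℝ)+1)) atTop
        (𝓝 (Real.log α)) := by
      have := hlog.comp (tendsto_add_atTop_nat 1)
      refine this.congr fun n => ?_
      simp [Function.comp]
    have h2 : Tendsto (fun n : ℕ => ((n:ℝ)+1) / n) atTop (𝓝 1) := by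
      have h3 : Tendsto (fun n : ℕ => 1 + 1/(n:ℝ)) atTop (𝓝 (1 + 0)) :=
        tendsto_const_nhds.add tendsto_one_div_atTop_nhds_zero_nat
      rw [add_zero] at h3
      refine h3.congr' ?_
      filter_upwards [eventually_gt_atTop 0] with n hn
      have hn' : (n:ℝ) ≠ 0 := Nat.cast_ne_zero.mpr hn.ne'
      field_simp
    have hg : Tendsto (fun n : ℕ => Real.log (a (n+1)) / n) atTop (𝓝 (Real.log α)) := by
      have hmul := h1.mul h2
      rw [mul_one] at hmul
      refine hmul.congr' ?_
      filter_upwards [eventually_gt_atTop 0] with n hn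
      have hn' : (n:ℝ) ≠ 0 := Nat.cast_ne_zero.mpr hn.ne'
      have hn1 : (n:ℝ) + 1 ≠ 0 := by positivity
      field_simp
    have hh : Tendsto (fun n : ℕ => (Real.log (a (n+1)) + Real.log 2) / n) atTop
        (𝓝 (Real.log α)) := by
      have h4 : Tendsto (fun n : ℕ => Real.log 2 / (n:ℝ)) atTop (𝓝 0) := by
        simpa [div_eq_mul_inv, mul_comm] using
          tendsto_one_div_atTop_nhds_zero_nat.const_mul (Real.log 2)
      have := hg.add h4
      rw [add_zero] at this
      exact this.congr fun n => (add_div _ _ _).symm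
    refine tendsto_of_tendsto_of_tendsto_of_le_of_le' hg hh ?_ ?_
    · filter_upwards [eventually_gt_atTop 0] with n hn
      have hn' : (0:ℝ) < (n:ℝ) := Nat.cast_pos.mpr hn
      gcongr
      · exact_mod_cast hpos (n+1)
      · linarith
    · filter_upwards [eventually_gt_atTop 0] with n hn
      have hn' : (0:ℝ) < (n:ℝ) := Nat.cast_pos.mpr hn
      gcongr
      have h2a : Real.log ((a (n+1) : ℝ) + x) ≤ Real.log (2 * (a (n+1) : ℝ)) := by
        apply Real.log_le_log (hax n)
        linarith [ha1 n]
      rw [Real.log_mul (by norm_num) (by linarith [ha1 n])] at h2a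
      linarith
  -- main tendsto for z ≠ 0
  have key : ∀ z : ℂ, z ≠ 0 →
      Tendsto (fun n : ℕ =>
          Real.log (((a (n+1) : ℝ) + x) ^ (-s.re) * (‖z‖) ^ (n+1)) / n)
        atTop (𝓝 (Real.log (‖z‖) - s.re * Real.log α)) := by
    intro z hz
    have hz0 : 0 < ‖z‖ := by
      simpa [norm_pos_iff] using hz
    have heq : ∀ n : ℕ, 0 < n →
        Real.log (((a (n+1) : ℝ) + x) ^ (-s.re) * (‖z‖) ^ (n+1)) / n
          = (-s.re) * (Real.log ((a (n+1) : ℝ) + x) / n)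
            + (((n:ℝ)+1)/n) * Real.log (‖z‖) := by
      intro n hn
      have hn' : (n:ℝ) ≠ 0 := Nat.cast_ne_zero.mpr hn.ne'
      rw [Real.log_mul (ne_of_gt (Real.rpow_pos_of_pos (hax n) _))
        (pow_ne_zero _ hz0.ne'), Real.log_rpow (hax n), Real.log_pow]
      push_cast
      field_simp
    have h2 : Tendsto (fun n : ℕ => ((n:ℝ)+1) / n) atTop (𝓝 1) := by
      have h3 : Tendsto (fun n : ℕ => 1 + 1/(n:ℝ)) atTop (𝓝 (1 + 0)) :=
        tendsto_const_nhds.add tendsto_one_div_atTop_nhds_zero_nat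
      rw [add_zero] at h3
      refine h3.congr' ?_
      filter_upwards [eventually_gt_atTop 0] with n hn
      have hn' : (n:ℝ) ≠ 0 := Nat.cast_ne_zero.mpr hn.ne'
      field_simp
    have ht : Tendsto (fun n : ℕ =>
        (-s.re) * (Real.log ((a (n+1) : ℝ) + x) / n)
          + (((n:ℝ)+1)/n) * Real.log (‖z‖)) atTop
        (𝓝 ((-s.re) * Real.log α + 1 * Real.log (‖z‖))) :=
      (hlog'.const_mul _).add (h2.mul_const _)
    have : (-s.re) * Real.log α + 1 * Real.log (‖z‖)
        = Real.log (‖z‖) - s.re * Real.log α := by ring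
    rw [this] at ht
    refine ht.congr' ?_
    filter_upwards [eventually_gt_atTop 0] with n hn
    exact (heq n hn).symm
  constructor
  · -- summable
    intro z hz
    by_cases hz0 : z = 0
    · subst hz0
      apply summable_of_ne_finset_zero (s := ∅)
      intro n _
      simp
    have hzpos : 0 < ‖z‖ := by simpa [norm_pos_iff] using hz0
    set L : ℝ := Real.log (‖z‖) - s.re * Real.log α with hL
    have hLneg : L < 0 := by
      have : Real.log (‖z‖) < Real.log (α ^ s.re) :=
        Real.log_lt_log hzpos hz
      rw [Real.log_rpow hα0] at this
      linarith
    have hev : ∀ᶠ n : ℕ in atTop,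
        Real.log (((a (n+1) : ℝ) + x) ^ (-s.re) * (‖z‖) ^ (n+1)) / n
          < L / 2 := (key z hz0).eventually_lt_const (by linarith)
    rw [eventually_atTop] at hev
    obtain ⟨N, hN⟩ := hev
    rw [← summable_nat_add_iff (N + 1)]
    have hr0 : (0:ℝ) ≤ Real.exp (L/2) := (Real.exp_pos _).le
    have hr1 : Real.exp (L/2) < 1 := by
      rw [Real.exp_lt_one_iff]; linarith
    refine Summable.of_nonneg_of_le (fun n => by positivity)
      (fun n => ?_) (((summable_geometric_of_lt_one hr0 hr1).mul_left
        (Real.exp (L/2) ^ (N+1))).congr fun n => by rw [← pow_add, add_comm])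
    have hn1 : 0 < n + (N + 1) := Nat.succ_le_iff.mp (Nat.le_add_left _ _)
    have hb := hN (n + (N+1)) (by omega)
    set m := n + (N + 1)
    have hm0 : (0:ℝ) < (m:ℝ) := Nat.cast_pos.mpr hn1
    have hf0 : 0 < ((a (m+1) : ℝ) + x) ^ (-s.re) * (‖z‖) ^ (m+1) :=
      mul_pos (Real.rpow_pos_of_pos (hax m) _) (pow_pos hzpos _)
    have hlt : Real.log (((a (m+1) : ℝ) + x) ^ (-s.re) * (‖z‖) ^ (m+1))
        < (m:ℝ) * (L/2) := by
      rw [div_lt_iff₀ hm0] at hb; linarith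
    have := Real.exp_lt_exp.mpr hlt
    rw [Real.exp_log hf0] at this
    calc ‖(((a (m + 1) : ℝ) + x : ℝ) : ℂ) ^ (-s) * z ^ (m + 1)‖
        = ((a (m+1) : ℝ) + x) ^ (-s.re) * (‖z‖) ^ (m+1) := habs z m
      _ ≤ Real.exp ((m:ℝ) * (L/2)) := this.le
      _ = Real.exp (L/2) ^ m := by
          rw [← Real.exp_nat_mul]
  · -- not summable
    intro z hz hsum
    have hzpos : 0 < ‖z‖ := lt_of_le_of_lt (Real.rpow_nonneg hα0.le _) hz
    have hz0 : z ≠ 0 := by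
      intro h; rw [h] at hzpos; simp at hzpos
    set L : ℝ := Real.log (‖z‖) - s.re * Real.log α with hL
    have hLpos : 0 < L := by
      have : Real.log (α ^ s.re) < Real.log (‖z‖) :=
        Real.log_lt_log (Real.rpow_pos_of_pos hα0 _) hz
      rw [Real.log_rpow hα0] at this
      linarith
    have h0 : Tendsto (fun n : ℕ =>
        ((a (n+1) : ℝ) + x) ^ (-s.re) * (‖z‖) ^ (n+1)) atTop (𝓝 0) := by
      have := hsum.tendsto_atTop_zero
      have habs0 : Tendsto (fun n : ℕ =>
          ‖(((a (n + 1) : ℝ) + x : ℝ) : ℂ) ^ (-s) * z ^ (n + 1)‖)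
          atTop (𝓝 0) := by
        have h := (continuous_norm.tendsto 0).comp this
        simp only [Function.comp, norm_zero] at h
        exact h
      exact habs0.congr fun n => habs z n
    have hev1 : ∀ᶠ n : ℕ in atTop,
        ((a (n+1) : ℝ) + x) ^ (-s.re) * (‖z‖) ^ (n+1) < 1 :=
      h0.eventually_lt_const one_pos
    have hev2 : ∀ᶠ n : ℕ in atTop,
        L / 2 < Real.log (((a (n+1) : ℝ) + x) ^ (-s.re) * (‖z‖) ^ (n+1)) / n :=
      (key z hz0).eventually_const_lt (by linarith)
    have hev3 : ∀ᶠ n : ℕ in atTop, 0 < n := eventually_gt_atTop 0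
    obtain ⟨n, h1, h2, h3⟩ := (hev1.and (hev2.and hev3)).exists
    have hn0 : (0:ℝ) < (n:ℝ) := Nat.cast_pos.mpr h3
    have hf0 : 0 < ((a (n+1) : ℝ) + x) ^ (-s.re) * (‖z‖) ^ (n+1) :=
      mul_pos (Real.rpow_pos_of_pos (hax n) _) (pow_pos hzpos _)
    have hlog1 : Real.log (((a (n+1) : ℝ) + x) ^ (-s.re) * (‖z‖) ^ (n+1)) < 0 :=
      Real.log_neg hf0 h1
    have : 0 < Real.log (((a (n+1) : ℝ) + x) ^ (-s.re) * (‖z‖) ^ (n+1)) := by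
      have h5 := h2
      have h4 : (0:ℝ) < L/2 * n := by positivity
      rw [lt_div_iff₀ hn0] at h5
      nlinarith
    linarith
end

section
/- Let λ_1 > 0, α_1 > 1 be reals, λ_2, α_2 ∈ ℂ with 0 < |α_2| < α_1, |λ_2 α_2| < λ_1 α_1. Fix a complex s. The function of z given by F(z) = ∑_{k=0}^∞ C(-s,k) λ_1^{-s-k} λ_2^{k} · z/(α_1^{s+k} α_2^{-k} - z) converges normally on compact subsets of ℂ avoiding the points z_k := α_1^{s+k} α_2^{-k} (k ≥ 0), hence defines a meromorphic function of z on ℂ with (at most) simple poles at the points z_k. -/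
open Complex Filter Topology

/-- The `k`-th term of the series defining the continuation in `z`. -/
noncomputable def term15 (s : ℂ) (lam1 α1 : ℝ) (lam2 α2 : ℂ) (k : ℕ) (z : ℂ) : ℂ :=
  cbinom (-s) k * (lam1 : ℂ) ^ (-s - (k : ℂ)) * lam2 ^ k *
    (z / ((α1 : ℂ) ^ (s + (k : ℂ)) * α2 ^ (-(k : ℤ)) - z))

/-- The `k`-th pole location. -/
noncomputable def pole15 (s : ℂ) (α1 : ℝ) (α2 : ℂ) (k : ℕ) : ℂ :=
  (α1 : ℂ) ^ (s + (k : ℂ)) * α2 ^ (-(k : ℤ))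

lemma abs_cbinom_le (a : ℂ) (k : ℕ) :
    ‖cbinom a k‖ ≤ ∏ i ∈ Finset.range k, ((‖a‖ + i) / (i + 1)) := by
  have h1 : ‖cbinom a k‖
      = (∏ i ∈ Finset.range k, ‖a - i‖) / (k.factorial : ℝ) := by
    rw [cbinom, norm_div, norm_prod]
    norm_num
  have h2 : ∏ i ∈ Finset.range k, ((‖a‖ + i) / (i + 1))
      = (∏ i ∈ Finset.range k, (‖a‖ + i)) / (k.factorial : ℝ) := by
    rw [Finset.prod_div_distrib, ← Finset.prod_range_add_one_eq_factorial]
    push_cast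
    rfl
  rw [h1, h2]
  have hfac : (0:ℝ) < (k.factorial : ℝ) := by positivity
  have h3 : (∏ i ∈ Finset.range k, ‖a - i‖)
      ≤ ∏ i ∈ Finset.range k, (‖a‖ + i) := by
    apply Finset.prod_le_prod (fun i _ => norm_nonneg _)
    intro i _
    calc ‖a - i‖ ≤ ‖a‖ + ‖(i:ℂ)‖ := by simpa using norm_sub_le a (i:ℂ)
      _ = ‖a‖ + i := by rw [Complex.norm_natCast]
  gcongr

lemma summable_abs_cbinom_mul (a : ℂ) {r : ℝ} (hr0 : 0 ≤ r) (hr : r < 1) :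
    Summable (fun k => ‖cbinom a k‖ * r ^ k) := by
  set w : ℕ → ℝ := fun k => (∏ i ∈ Finset.range k, ((‖a‖ + i) / (i + 1))) * r ^ k with hw
  have hwpos : ∀ k, 0 ≤ w k := by
    intro k
    apply mul_nonneg _ (pow_nonneg hr0 k)
    exact Finset.prod_nonneg fun i _ => div_nonneg (by positivity) (by positivity)
  have hsw : Summable w := by
    apply summable_of_ratio_norm_eventually_le (r := (1 + r) / 2) (by linarith)
    have hlim : Tendsto (fun k : ℕ => (‖a‖ + k) / (k + 1) * r) atTop (𝓝 r) := by
      have h1 : Tendsto (fun k : ℕ => (‖a‖ + k) / (k + 1)) atTop (𝓝 1) := by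
        have h2 : (fun k : ℕ => (‖a‖ + k) / (k + 1))
            = fun k : ℕ => (‖a‖ - 1) * (1 / (k + 1)) + 1 := by
          funext k
          have : (k : ℝ) + 1 ≠ 0 := by positivity
          field_simp
          ring
        rw [h2]
        have h3 := (tendsto_one_div_add_atTop_nhds_zero_nat.const_mul
          (‖a‖ - 1)).add (tendsto_const_nhds (x := (1:ℝ)) (f := atTop))
        simpa using h3
      simpa using h1.mul_const r
    have hev : ∀ᶠ k : ℕ in atTop, (‖a‖ + k) / (k + 1) * r ≤ (1 + r) / 2 :=
      hlim.eventually (eventually_le_nhds (by linarith))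
    filter_upwards [hev] with k hk
    have hwk : w (k + 1) = ((‖a‖ + k) / (k + 1) * r) * w k := by
      rw [hw]
      simp only [Finset.prod_range_succ, pow_succ]
      ring
    rw [Real.norm_of_nonneg (hwpos _), Real.norm_of_nonneg (hwpos _), hwk]
    exact mul_le_mul_of_nonneg_right hk (hwpos k)
  apply Summable.of_nonneg_of_le (fun k => by positivity) _ hsw
  intro k
  exact mul_le_mul_of_nonneg_right (abs_cbinom_le a k) (pow_nonneg hr0 k)

noncomputable def B15 (s : ℂ) (lam1 : ℝ) (lam2 : ℂ) (k : ℕ) : ℝ :=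
  ‖cbinom (-s) k‖ * lam1 ^ (-s.re - k) * ‖lam2‖ ^ k

noncomputable def A15 (s : ℂ) (lam1 α1 : ℝ) (lam2 α2 : ℂ) (k : ℕ) : ℝ :=
  ‖cbinom (-s) k‖ *
    ((lam1 * α1) ^ (-s.re) * (‖lam2‖ * ‖α2‖ / (lam1 * α1)) ^ k)

lemma term15_eq (s : ℂ) (lam1 α1 : ℝ) (lam2 α2 : ℂ) (k : ℕ) (z : ℂ) :
    term15 s lam1 α1 lam2 α2 k z =
      cbinom (-s) k * (lam1 : ℂ) ^ (-s - (k : ℂ)) * lam2 ^ k *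
        (z / (pole15 s α1 α2 k - z)) := rfl

lemma abs_term15 (s : ℂ) {lam1 : ℝ} (hlam1 : 0 < lam1) (α1 : ℝ) (lam2 α2 : ℂ) (k : ℕ) (z : ℂ) :
    ‖term15 s lam1 α1 lam2 α2 k z‖ =
      B15 s lam1 lam2 k * (‖z‖ / ‖pole15 s α1 α2 k - z‖) := by
  rw [term15_eq, norm_mul, norm_mul, norm_mul, norm_div, norm_pow, B15]
  congr 2
  rw [norm_cpow_eq_rpow_re_of_pos hlam1]
  norm_num

lemma abs_pole15 (s : ℂ) {α1 : ℝ} (hα1 : 0 < α1) {α2 : ℂ} (hα2 : 0 < ‖α2‖) (k : ℕ) :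
    ‖pole15 s α1 α2 k‖ = α1 ^ s.re * (α1 / ‖α2‖) ^ k := by
  rw [pole15, norm_mul, norm_cpow_eq_rpow_re_of_pos hα1, norm_zpow]
  have h1 : (s + (k : ℂ)).re = s.re + k := by simp
  rw [h1, Real.rpow_add hα1, Real.rpow_natCast, zpow_neg, zpow_natCast, div_pow]
  field_simp

lemma B15_eq (s : ℂ) {lam1 α1 : ℝ} (hlam1 : 0 < lam1) (hα1 : 0 < α1) (lam2 : ℂ) {α2 : ℂ}
    (hα2 : 0 < ‖α2‖) (k : ℕ) :
    B15 s lam1 lam2 k = A15 s lam1 α1 lam2 α2 k * ‖pole15 s α1 α2 k‖ := by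
  rw [B15, A15, abs_pole15 s hα1 hα2 k]
  rw [Real.rpow_sub hlam1, Real.rpow_natCast, Real.mul_rpow hlam1.le hα1.le]
  have e1 : (‖lam2‖ * ‖α2‖ / (lam1 * α1)) ^ k
      = ‖lam2‖ ^ k * ‖α2‖ ^ k / (lam1 ^ k * α1 ^ k) := by
    rw [div_pow, mul_pow, mul_pow]
  rw [e1]
  have h1 : (0:ℝ) < lam1 ^ s.re := Real.rpow_pos_of_pos hlam1 _
  have h2 : (0:ℝ) < α1 ^ s.re := Real.rpow_pos_of_pos hα1 _
  have h3 : (0:ℝ) < lam1 ^ k := by positivity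
  have h4 : (0:ℝ) < α1 ^ k := by positivity
  have h5 : (0:ℝ) < ‖α2‖ ^ k := by positivity
  rw [Real.rpow_neg hα1.le s.re]
  field_simp
  ring
  rw [inv_pow, mul_assoc _ (‖α2‖ ^ k), mul_inv_cancel₀ h5.ne', mul_one]

lemma summable_A15 {lam1 α1 : ℝ} (hlam1 : 0 < lam1) (hα1 : 1 < α1)
    {lam2 α2 : ℂ} (hdom : ‖lam2 * α2‖ < lam1 * α1) (s : ℂ) :
    Summable (A15 s lam1 α1 lam2 α2) := by
  have hpos : (0:ℝ) < lam1 * α1 := by nlinarith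
  have hr0 : 0 ≤ ‖lam2‖ * ‖α2‖ / (lam1 * α1) := by positivity
  have hr1 : ‖lam2‖ * ‖α2‖ / (lam1 * α1) < 1 := by
    rw [div_lt_one hpos, ← norm_mul]
    exact hdom
  have h := (summable_abs_cbinom_mul (-s) hr0 hr1).mul_left ((lam1 * α1) ^ (-s.re))
  apply h.congr
  intro k
  simp only [A15]
  ring

lemma tendsto_abs_pole15 (s : ℂ) {α1 : ℝ} (hα1 : 1 < α1) {α2 : ℂ}
    (hα2 : 0 < ‖α2‖) (hα2' : ‖α2‖ < α1) :
    Tendsto (fun k => ‖pole15 s α1 α2 k‖) atTop atTop := by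
  have h0 : (0:ℝ) < α1 := by linarith
  have hq : 1 < α1 / ‖α2‖ := (one_lt_div hα2).2 hα2'
  have h1 : Tendsto (fun k : ℕ => α1 ^ s.re * (α1 / ‖α2‖) ^ k) atTop atTop :=
    (tendsto_pow_atTop_atTop_of_one_lt hq).const_mul_atTop (Real.rpow_pos_of_pos h0 _)
  exact h1.congr fun k => (abs_pole15 s h0 hα2 k).symm

lemma bound_aux {lam1 α1 : ℝ} (hlam1 : 0 < lam1) (hα1 : 1 < α1)
    {lam2 α2 : ℂ} (hα2 : 0 < ‖α2‖) (hα2' : ‖α2‖ < α1)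
    (hdom : ‖lam2 * α2‖ < lam1 * α1) (s : ℂ)
    (K : Set ℂ) (hK : IsCompact K) (f : ℕ → ℂ → ℂ)
    (hf : ∀ j, f j = term15 s lam1 α1 lam2 α2 j ∨ f j = 0)
    (hpole : ∀ j, f j ≠ 0 → pole15 s α1 α2 j ∉ K) :
    ∃ u : ℕ → ℝ, Summable u ∧ ∀ j, ∀ z ∈ K, ‖f j z‖ ≤ u j := by
  classical
  have h0 : (0:ℝ) < α1 := by linarith
  rcases K.eq_empty_or_nonempty with rfl | hne
  · exact ⟨fun _ => 0, summable_zero, fun j z hz => absurd hz (Set.notMem_empty z)⟩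
  obtain ⟨R, hR⟩ := hK.isBounded.subset_closedBall (0 : ℂ)
  have hRz : ∀ z ∈ K, ‖z‖ ≤ R := by
    intro z hz
    have := hR hz
    rwa [Metric.mem_closedBall, dist_zero_right] at this
  have hR0 : 0 ≤ R := (norm_nonneg _).trans (hRz _ hne.some_mem)
  set p := pole15 s α1 α2 with hp
  set B := B15 s lam1 lam2 with hB
  set A := A15 s lam1 α1 lam2 α2 with hA
  have hBnn : ∀ j, 0 ≤ B j := by
    intro j
    rw [hB, B15]
    positivity
  have hAnn : ∀ j, 0 ≤ A j := by
    intro j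
    rw [hA, A15]
    positivity
  refine ⟨fun j => if f j = 0 then 0 else B j * R / Metric.infDist (p j) K, ?_, ?_⟩
  · -- Summability
    apply Summable.of_norm_bounded_eventually (g := fun j => 2 * R * A j)
      (((summable_A15 hlam1 hα1 hdom s).mul_left (2 * R)))
    rw [Nat.cofinite_eq_atTop]
    filter_upwards [(tendsto_abs_pole15 s hα1 hα2 hα2').eventually_ge_atTop (2 * R + 1)]
      with j hj
    by_cases hfj : f j = 0
    · rw [if_pos hfj, norm_zero]
      exact mul_nonneg (by positivity) (hAnn j)
    rw [if_neg hfj]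
    have hd1 : Metric.infDist (p j) K ≥ ‖p j‖ - R := by
      by_contra hcon
      push_neg at hcon
      obtain ⟨y, hy, hyd⟩ := (Metric.infDist_lt_iff hne).1 hcon
      have : ‖p j‖ ≤ ‖y‖ + dist (p j) y := by
        rw [dist_eq_norm]
        calc ‖p j‖ = ‖y + (p j - y)‖ := by rw [add_sub_cancel]
          _ ≤ ‖y‖ + ‖p j - y‖ := norm_add_le _ _
          _ = ‖y‖ + ‖p j - y‖ := rfl
      have := hRz y hy
      linarith
    have hd2 : ‖p j‖ / 2 ≤ Metric.infDist (p j) K := by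
      have : 2 * R ≤ ‖p j‖ := by linarith
      linarith
    have hdpos : 0 < Metric.infDist (p j) K := by
      have : 0 < ‖p j‖ / 2 := by linarith
      linarith
    have hppos : 0 < ‖p j‖ := by linarith
    have key : B j * R / Metric.infDist (p j) K ≤ 2 * R * A j := by
      have h1 : B j * R / Metric.infDist (p j) K ≤ B j * R / (‖p j‖ / 2) := by
        gcongr
        exact mul_nonneg (hBnn j) hR0
      have h2 : B j * R / (‖p j‖ / 2) = 2 * R * A j := by
        rw [hB, B15_eq s hlam1 h0 lam2 hα2 j, ← hA, ← hp]
        field_simp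
      linarith
    rw [Real.norm_of_nonneg (div_nonneg (mul_nonneg (hBnn j) hR0) Metric.infDist_nonneg)]
    exact key
  · -- Bound
    intro j z hz
    show ‖f j z‖ ≤ if f j = 0 then (0:ℝ) else B j * R / Metric.infDist (p j) K
    by_cases hfj : f j = 0
    · simp [hfj]
    rw [if_neg hfj]
    have hterm : f j = term15 s lam1 α1 lam2 α2 j := (hf j).resolve_right hfj
    rw [hterm, abs_term15 s hlam1]
    have hdpos : 0 < Metric.infDist (p j) K := by
      rw [← hK.isClosed.notMem_iff_infDist_pos hne]
      exact hpole j hfj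
    have hdle : Metric.infDist (p j) K ≤ ‖p j - z‖ := by
      have := Metric.infDist_le_dist_of_mem hz (x := p j)
      rwa [Complex.dist_eq] at this
    have habspos : 0 < ‖p j - z‖ := lt_of_lt_of_le hdpos hdle
    rw [mul_div_assoc'] at *
    calc B j * ‖z‖ / ‖p j - z‖
        ≤ B j * R / Metric.infDist (p j) K := by
          apply div_le_div₀ (mul_nonneg (hBnn j) hR0) _ hdpos hdle
          exact mul_le_mul_of_nonneg_left (hRz z hz) (hBnn j)
      _ = _ := rfl

lemma pole15_injective (s : ℂ) {α1 : ℝ} (hα1 : 1 < α1) {α2 : ℂ}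
    (hα2 : 0 < ‖α2‖) (hα2' : ‖α2‖ < α1) :
    Function.Injective (pole15 s α1 α2) := by
  have h0 : (0:ℝ) < α1 := by linarith
  have hq : 1 < α1 / ‖α2‖ := (one_lt_div hα2).2 hα2'
  intro j k heq
  have h1 : ‖pole15 s α1 α2 j‖ = ‖pole15 s α1 α2 k‖ := by rw [heq]
  rw [abs_pole15 s h0 hα2, abs_pole15 s h0 hα2] at h1
  have h2 := mul_left_cancel₀ (ne_of_gt (Real.rpow_pos_of_pos h0 s.re)) h1
  by_contra hne
  rcases lt_or_gt_of_ne hne with h | h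
  · exact absurd h2 (ne_of_lt (pow_lt_pow_right₀ hq h))
  · exact absurd h2.symm (ne_of_lt (pow_lt_pow_right₀ hq h))

lemma exists_good_ball (s : ℂ) {α1 : ℝ} (hα1 : 1 < α1) {α2 : ℂ}
    (hα2 : 0 < ‖α2‖) (hα2' : ‖α2‖ < α1)
    (z₀ : ℂ) (E : Set ℕ) (hz₀ : ∀ j ∈ E, z₀ ≠ pole15 s α1 α2 j) :
    ∃ r : ℝ, 0 < r ∧ ∀ j ∈ E, pole15 s α1 α2 j ∉ Metric.closedBall z₀ r := by
  classical
  set p := pole15 s α1 α2 with hp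
  obtain ⟨N, hN⟩ := (Filter.eventually_atTop).1
    ((tendsto_abs_pole15 s hα1 hα2 hα2').eventually_ge_atTop (‖z₀‖ + 1))
  set S : Finset ℂ := ((Finset.range N).image p).filter (· ≠ z₀) with hS
  have hz₀S : z₀ ∉ (S : Set ℂ) := by
    intro hmem
    simp only [hS, Finset.coe_filter, Set.mem_setOf_eq] at hmem
    exact hmem.2 rfl
  have hSclosed : IsClosed (S : Set ℂ) := S.finite_toSet.isClosed
  have hopen : IsOpen ((S : Set ℂ)ᶜ) := hSclosed.isOpen_compl
  obtain ⟨ε, hε, hball⟩ := Metric.isOpen_iff.1 hopen z₀ hz₀S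
  refine ⟨min (ε / 2) (1 / 2), by positivity, ?_⟩
  intro j hj hmem
  rw [Metric.mem_closedBall] at hmem
  by_cases hjN : j < N
  · have hpjS : p j ∈ (S : Set ℂ) := by
      simp only [hS, Finset.coe_filter, Set.mem_setOf_eq]
      refine ⟨Finset.mem_image.2 ⟨j, Finset.mem_range.2 hjN, rfl⟩, ?_⟩
      exact fun h => hz₀ j hj h.symm
    have : p j ∈ Metric.ball z₀ ε := by
      rw [Metric.mem_ball]
      calc dist (p j) z₀ ≤ min (ε / 2) (1 / 2) := hmem
        _ ≤ ε / 2 := min_le_left _ _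
        _ < ε := by linarith
    exact hball this hpjS
  · push_neg at hjN
    have h1 : ‖z₀‖ + 1 ≤ ‖p j‖ := hN j hjN
    have h2 : ‖p j‖ ≤ ‖z₀‖ + dist (p j) z₀ := by
      rw [Complex.dist_eq]
      calc ‖p j‖ = ‖z₀ + (p j - z₀)‖ := by rw [add_sub_cancel]
        _ ≤ ‖z₀‖ + ‖p j - z₀‖ := norm_add_le _ _
    have h3 : dist (p j) z₀ ≤ 1 / 2 := hmem.trans (min_le_right _ _)
    linarith

lemma term15_differentiableOn (s : ℂ) (lam1 α1 : ℝ) (lam2 α2 : ℂ) (j : ℕ) {U : Set ℂ}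
    (hU : ∀ z ∈ U, pole15 s α1 α2 j ≠ z) :
    DifferentiableOn ℂ (term15 s lam1 α1 lam2 α2 j) U := by
  have h : term15 s lam1 α1 lam2 α2 j = fun z =>
      (cbinom (-s) j * (lam1 : ℂ) ^ (-s - (j : ℂ)) * lam2 ^ j) *
        (z / (pole15 s α1 α2 j - z)) := rfl
  rw [h]
  apply DifferentiableOn.const_mul
  apply DifferentiableOn.div differentiableOn_id
    ((differentiableOn_const _).sub differentiableOn_id)
  intro z hz
  exact sub_ne_zero.2 (hU z hz)

theorem normal_convergence_and_meromorphy_in_z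
    (lam1 α1 : ℝ) (hlam1 : 0 < lam1) (hα1 : 1 < α1)
    (lam2 α2 : ℂ) (hα2 : 0 < ‖α2‖) (hα2' : ‖α2‖ < α1)
    (hdom : ‖lam2 * α2‖ < lam1 * α1) (s : ℂ) :
    (∀ K : Set ℂ, IsCompact K → (∀ k : ℕ, pole15 s α1 α2 k ∉ K) →
      ∃ u : ℕ → ℝ, Summable u ∧
        ∀ k : ℕ, ∀ z ∈ K, ‖term15 s lam1 α1 lam2 α2 k z‖ ≤ u k) ∧
    (∀ z : ℂ, (∀ k : ℕ, z ≠ pole15 s α1 α2 k) →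
      AnalyticAt ℂ (fun z => ∑' k : ℕ, term15 s lam1 α1 lam2 α2 k z) z) ∧
    (∀ k : ℕ, ∃ c : ℂ,
      Tendsto (fun z : ℂ => (z - pole15 s α1 α2 k) *
          ∑' j : ℕ, term15 s lam1 α1 lam2 α2 j z)
        (𝓝[≠] (pole15 s α1 α2 k)) (𝓝 c)) := by
  classical
  refine ⟨?_, ?_, ?_⟩
  · -- Part 1
    intro K hK hKp
    obtain ⟨u, hu, hb⟩ := bound_aux hlam1 hα1 hα2 hα2' hdom s K hK
      (fun j => term15 s lam1 α1 lam2 α2 j) (fun j => Or.inl rfl) (fun j _ => hKp j)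
    exact ⟨u, hu, fun k z hz => hb k z hz⟩
  · -- Part 2
    intro z₀ hz₀
    obtain ⟨r, hr, hravoid⟩ := exists_good_ball s hα1 hα2 hα2' z₀ Set.univ
      (fun j _ => hz₀ j)
    obtain ⟨u, hu, hb⟩ := bound_aux hlam1 hα1 hα2 hα2' hdom s
      (Metric.closedBall z₀ r) (isCompact_closedBall z₀ r)
      (fun j => term15 s lam1 α1 lam2 α2 j) (fun j => Or.inl rfl)
      (fun j _ => hravoid j (Set.mem_univ j))
    have hTU : TendstoUniformlyOn
        (fun (t : Finset ℕ) z => ∑ k ∈ t, term15 s lam1 α1 lam2 α2 k z)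
        (fun z => ∑' k, term15 s lam1 α1 lam2 α2 k z) atTop (Metric.closedBall z₀ r) :=
      tendstoUniformlyOn_tsum hu (fun k z hz => by
        exact hb k z hz)
    have hTLU := hTU.tendstoLocallyUniformlyOn.mono Metric.ball_subset_closedBall
    have hdiff : ∀ t : Finset ℕ, DifferentiableOn ℂ
        (fun z => ∑ k ∈ t, term15 s lam1 α1 lam2 α2 k z) (Metric.ball z₀ r) := by
      intro t
      apply DifferentiableOn.fun_sum
      intro j _
      apply term15_differentiableOn
      intro z hz heq
      exact hravoid j (Set.mem_univ j) (heq ▸ Metric.ball_subset_closedBall hz)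
    have hD := hTLU.differentiableOn (Filter.Eventually.of_forall hdiff) Metric.isOpen_ball
    exact hD.analyticAt (Metric.isOpen_ball.mem_nhds (Metric.mem_ball_self hr))
  · -- Part 3
    intro k
    set p := pole15 s α1 α2 with hp
    have hpk_ne : ∀ j ∈ {j : ℕ | j ≠ k}, p k ≠ p j := by
      intro j hj heq
      exact hj (pole15_injective s hα1 hα2 hα2' heq.symm)
    obtain ⟨r, hr, hravoid⟩ := exists_good_ball s hα1 hα2 hα2' (p k) {j | j ≠ k} hpk_ne
    set K := Metric.closedBall (p k) r with hK
    have hKnhds : K ∈ 𝓝 (p k) := Metric.closedBall_mem_nhds _ hr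
    set f : ℕ → ℂ → ℂ := fun j => if j = k then 0 else term15 s lam1 α1 lam2 α2 j with hf
    obtain ⟨u, hu, hb⟩ := bound_aux hlam1 hα1 hα2 hα2' hdom s K (isCompact_closedBall _ _) f
      (fun j => by
        by_cases h : j = k
        · exact Or.inr (by simp [hf, h])
        · exact Or.inl (by simp [hf, h]))
      (fun j hfj => by
        by_cases h : j = k
        · exact absurd (by simp [hf, h]) hfj
        · exact hravoid j h)
    set G : ℂ → ℂ := fun z => ∑' j, f j z with hG
    have hTU : TendstoUniformlyOn (fun (t : Finset ℕ) z => ∑ j ∈ t, f j z) G atTop K :=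
      tendstoUniformlyOn_tsum hu (fun j z hz => by
        exact hb j z hz)
    have hGcont : ContinuousOn G K := by
      apply hTU.continuousOn
      apply Filter.Frequently.of_forall
      intro t
      apply continuousOn_finset_sum
      intro j _
      by_cases h : j = k
      · simp only [hf, h, if_pos rfl]
        exact continuousOn_const
      · simp only [hf, if_neg h]
        apply (term15_differentiableOn s lam1 α1 lam2 α2 j ?_).continuousOn
        intro z hz heq
        exact hravoid j h (heq ▸ hz)
    have hGsum : ∀ z ∈ K, Summable (fun j => f j z) := by
      intro z hz
      apply Summable.of_norm_bounded hu
      intro j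
      exact hb j z hz
    set bk : ℂ := cbinom (-s) k * (lam1 : ℂ) ^ (-s - (k : ℂ)) * lam2 ^ k with hbk
    refine ⟨-(bk * p k), ?_⟩
    have htend : Tendsto (fun z => -(bk * z) + (z - p k) * G z) (𝓝[≠] (p k))
        (𝓝 (-(bk * p k))) := by
      have t1 : Tendsto (fun z : ℂ => -(bk * z)) (𝓝[≠] (p k)) (𝓝 (-(bk * p k))) :=
        (((continuous_const.mul continuous_id).neg).tendsto (p k)).mono_left
          nhdsWithin_le_nhds
      have hsub : Tendsto (fun z : ℂ => z - p k) (𝓝[≠] (p k)) (𝓝 0) :=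
        (((continuous_id.sub continuous_const)).tendsto' (p k) 0 (by simp [hp])).mono_left
          nhdsWithin_le_nhds
      have hle : 𝓝[≠] (p k) ≤ 𝓝[K] (p k) := by
        rw [nhdsWithin_restrict' {(p k)}ᶜ hKnhds]
        exact nhdsWithin_mono _ Set.inter_subset_right
      have hGt : Tendsto G (𝓝[≠] (p k)) (𝓝 (G (p k))) :=
        (hGcont.continuousWithinAt (Metric.mem_closedBall_self hr.le)).mono_left hle
      have t2 : Tendsto (fun z => (z - p k) * G z) (𝓝[≠] (p k)) (𝓝 0) := by
        simpa using hsub.mul hGt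
      simpa using t1.add t2
    apply htend.congr'
    have hev1 : ∀ᶠ z in 𝓝[≠] (p k), z ∈ K := nhdsWithin_le_nhds hKnhds
    have hev2 : ∀ᶠ z in 𝓝[≠] (p k), z ≠ p k := eventually_mem_nhdsWithin
    filter_upwards [hev1, hev2] with z hzK hzne
    have hsummf := hGsum z hzK
    have hsummaux : Summable (fun j => if j = k then term15 s lam1 α1 lam2 α2 k z else 0) := by
      apply summable_of_ne_finset_zero (s := {k})
      intro j hj
      rw [if_neg]
      simpa using hj
    have hdecomp : (fun j => term15 s lam1 α1 lam2 α2 j z)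
        = fun j => f j z + (if j = k then term15 s lam1 α1 lam2 α2 k z else 0) := by
      funext j
      by_cases h : j = k
      · simp [hf, h]
      · simp [hf, h]
    have htsum : ∑' j, term15 s lam1 α1 lam2 α2 j z
        = G z + term15 s lam1 α1 lam2 α2 k z := by
      rw [hdecomp, Summable.tsum_add hsummf hsummaux, tsum_ite_eq]
    rw [htsum]
    have hzsub : (p k : ℂ) - z ≠ 0 := sub_ne_zero.2 (Ne.symm hzne)
    have hterm_k : term15 s lam1 α1 lam2 α2 k z = bk * (z / (p k - z)) := rfl
    rw [hterm_k]
    field_simp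
    ring
end
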